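/- Let 𝒴 be a finite nonempty set and ν : 𝒴 → ℝ a function, and suppose the set M := {φ : 𝒴 → [0,1] : Σ_y φ(y) = 1 and Σ_y φ(y)ν(y) = 0} of probability vectors annihilating ν is nonempty. Then {g : 𝒴 → ℝ : g ≤ αν pointwise for some α ∈ ℝ} = {g : 𝒴 → ℝ : Σ_y φ(y)g(y) ≤ 0 for all φ ∈ M}; in particular the left-hand set is already closed and no closure operation is needed in finite dimensions. -/
import Mathlib


/-- Finite-dimensional case: for a finite outcome set, the set of gambles dominated by some
calibration gamble `α ν` equals the set of gambles with nonpositive expectation under every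
probability vector annihilating `ν`; in particular that set is already closed and no closure
operation is needed. -/
theorem stmt8 {Y : Type*} [Fintype Y] [Nonempty Y] (ν : Y → ℝ)
    (hne : {φ : Y → ℝ | (∀ y, 0 ≤ φ y ∧ φ y ≤ 1) ∧ (∑ y, φ y) = 1 ∧
      (∑ y, φ y * ν y) = 0}.Nonempty) :
    ({g : Y → ℝ | ∃ α : ℝ, ∀ y, g y ≤ α * ν y}
      = {g : Y → ℝ | ∀ φ ∈ {φ : Y → ℝ | (∀ y, 0 ≤ φ y ∧ φ y ≤ 1) ∧ (∑ y, φ y) = 1 ∧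
          (∑ y, φ y * ν y) = 0}, (∑ y, φ y * g y) ≤ 0}) ∧
    IsClosed {g : Y → ℝ | ∃ α : ℝ, ∀ y, g y ≤ α * ν y} := by
  set M : Set (Y → ℝ) := {φ : Y → ℝ | (∀ y, 0 ≤ φ y ∧ φ y ≤ 1) ∧ (∑ y, φ y) = 1 ∧
      (∑ y, φ y * ν y) = 0} with hM
  classical
  have key : {g : Y → ℝ | ∃ α : ℝ, ∀ y, g y ≤ α * ν y}
      = {g : Y → ℝ | ∀ φ ∈ M, (∑ y, φ y * g y) ≤ 0} := by
    ext g
    simp only [Set.mem_setOf_eq]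
    constructor
    · rintro ⟨α, hα⟩ φ ⟨hφ01, hφ1, hφν⟩
      calc ∑ y, φ y * g y ≤ ∑ y, φ y * (α * ν y) :=
            Finset.sum_le_sum fun y _ => mul_le_mul_of_nonneg_left (hα y) (hφ01 y).1
        _ = α * ∑ y, φ y * ν y := by rw [Finset.mul_sum]; congr 1; ext y; ring
        _ = 0 := by rw [hφν, mul_zero]
    · intro hg
      have hgood : ∀ (f : Y → ℝ) (z : Y),
          ∑ y, (if y = z then (1:ℝ) else 0) * f y = f z := by
        intro f z
        simp [ite_mul]
      have hZ : ∀ z, ν z = 0 → g z ≤ 0 := by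
        intro z hz
        have hmem : (fun y => if y = z then (1:ℝ) else 0) ∈ M := by
          refine ⟨fun y => by dsimp only; split <;> norm_num, by simp, ?_⟩
          rw [hgood ν z, hz]
        have := hg _ hmem
        rwa [hgood g z] at this
      have hPN : ∀ p n, 0 < ν p → ν n < 0 → g p / ν p ≤ g n / ν n := by
        intro p n hp hn
        have hpn : p ≠ n := by rintro rfl; linarith
        have hd : 0 < ν p - ν n := by linarith
        set t : ℝ := -ν n / (ν p - ν n) with ht
        have ht0 : 0 ≤ t := by
          apply div_nonneg <;> linarith
        have ht1 : t ≤ 1 := by rw [div_le_one hd]; linarith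
        set φ : Y → ℝ := fun y => if y = p then t else if y = n then 1 - t else 0 with hφ
        have hsum : ∀ f : Y → ℝ, ∑ y, φ y * f y = t * f p + (1 - t) * f n := by
          intro f
          rw [← Finset.sum_subset (Finset.subset_univ ({p, n} : Finset Y))]
          · rw [Finset.sum_insert (by simp [hpn]), Finset.sum_singleton]
            simp [hφ, hpn, Ne.symm hpn]
          · intro y _ hy
            simp only [Finset.mem_insert, Finset.mem_singleton, not_or] at hy
            simp [hφ, hy.1, hy.2]
        have htm : t * (ν p - ν n) = -ν n := by
          rw [ht]; field_simp
        have htm2 : (1 - t) * (ν p - ν n) = ν p := by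
          linear_combination -htm
        have hmem : φ ∈ M := by
          refine ⟨fun y => ?_, ?_, ?_⟩
          · simp only [hφ]; split
            · exact ⟨ht0, ht1⟩
            · split
              · constructor <;> linarith
              · norm_num
          · have := hsum (fun _ => 1)
            simpa using this
          · rw [hsum ν]
            linear_combination htm
        have hle := hg φ hmem
        rw [hsum g] at hle
        have h2 : -ν n * g p + ν p * g n ≤ 0 := by
          calc -ν n * g p + ν p * g n
              = (ν p - ν n) * (t * g p + (1 - t) * g n) := by
                linear_combination (-g p) * htm + (-g n) * htm2
            _ ≤ 0 := mul_nonpos_of_nonneg_of_nonpos hd.le hle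
        rw [show g n / ν n = (-g n) / (-ν n) by rw [neg_div_neg_eq],
          div_le_div_iff₀ hp (by linarith : (0:ℝ) < -ν n)]
        linarith
      by_cases hP : (Finset.univ.filter fun y => 0 < ν y).Nonempty
      · refine ⟨(Finset.univ.filter fun y => 0 < ν y).sup' hP (fun y => g y / ν y),
          fun y => ?_⟩
        rcases lt_trichotomy (ν y) 0 with h | h | h
        · obtain ⟨p, hpmem, hpeq⟩ := Finset.exists_mem_eq_sup' hP (fun y => g y / ν y)
          have hp : 0 < ν p := (Finset.mem_filter.mp hpmem).2
          have hle := hPN p y hp h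
          rw [hpeq]
          have := mul_le_mul_of_nonpos_right hle h.le
          rwa [div_mul_cancel₀ _ (ne_of_lt h)] at this
        · rw [h, mul_zero]; exact hZ y h
        · have hy : y ∈ Finset.univ.filter fun y => 0 < ν y :=
            Finset.mem_filter.mpr ⟨Finset.mem_univ y, h⟩
          have := Finset.le_sup' (fun y => g y / ν y) hy
          exact (div_le_iff₀ h).mp this
      · have hnp : ∀ y, ν y ≤ 0 := by
          intro y
          by_contra hc
          exact hP ⟨y, Finset.mem_filter.mpr ⟨Finset.mem_univ y, not_le.mp hc⟩⟩
        by_cases hN : (Finset.univ.filter fun y => ν y < 0).Nonempty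
        · refine ⟨(Finset.univ.filter fun y => ν y < 0).inf' hN (fun y => g y / ν y),
            fun y => ?_⟩
          rcases lt_or_eq_of_le (hnp y) with h | h
          · have hy : y ∈ Finset.univ.filter fun y => ν y < 0 :=
              Finset.mem_filter.mpr ⟨Finset.mem_univ y, h⟩
            have hle := Finset.inf'_le (fun y => g y / ν y) hy
            have := mul_le_mul_of_nonpos_right hle h.le
            rwa [div_mul_cancel₀ _ (ne_of_lt h)] at this
          · rw [h, mul_zero]; exact hZ y h
        · refine ⟨0, fun y => ?_⟩
          have hν0 : ν y = 0 := by
            by_contra hc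
            exact hN ⟨y, Finset.mem_filter.mpr ⟨Finset.mem_univ y,
              lt_of_le_of_ne (hnp y) hc⟩⟩
          rw [zero_mul]
          exact hZ y hν0
  refine ⟨key, ?_⟩
  rw [key]
  have : {g : Y → ℝ | ∀ φ ∈ M, (∑ y, φ y * g y) ≤ 0}
      = ⋂ φ ∈ M, {g : Y → ℝ | (∑ y, φ y * g y) ≤ 0} := by
    ext g; simp
  rw [this]
  refine isClosed_biInter fun φ _ => ?_
  exact isClosed_le (continuous_finset_sum _ fun y _ => continuous_const.mul (continuous_apply y))
    continuous_const
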